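/- There exist a complete metric space Z and a continuous map F : Z → Z such that the cascade (Z, F) is thickly sensitive but not multi-sensitive; that is: (a) there exists ε > 0 such that for every nonempty open subset U of Z, the set {n ∈ ℕ : diam(F^[n] '' U) > ε} is thick in ℕ (for every N ∈ ℕ there exists m ∈ ℕ with {m, m+1, …, m+N} contained in this set); and (b) for every ε > 0 there exist nonempty open subsets U₁, U₂ of Z with {n ∈ ℕ : diam(F^[n] '' U₁) > ε} ∩ {n ∈ ℕ : diam(F^[n] '' U₂) > ε} = ∅. -/

import Mathlib

open Set

/-- A cascade on a complete metric space that is thickly sensitive but not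
multi-sensitive. A set `B ⊆ ℕ` is thick iff for every `N` there is `m` with
`{m, m+1, …, m+N} ⊆ B`; here thick sensitivity is spelled out accordingly. -/
structure ThicklySensitiveNotMultiCascade where
  /-- the phase space -/
  Z : Type
  [instMet : MetricSpace Z]
  [instComplete : CompleteSpace Z]
  /-- the map generating the cascade -/
  F : Z → Z
  contF : Continuous F
  /-- (a) thickly sensitive: some `ε > 0` makes `{n : ℕ | diam (F^[n] '' U) > ε}` thick
  for every nonempty open `U` -/
  thicklySensitive : ∃ ε : ℝ, 0 < ε ∧ ∀ U : Set Z, IsOpen U → U.Nonempty →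
    ∀ N : ℕ, ∃ m : ℕ, ∀ k ≤ N, (m + k) ∈ {n : ℕ | ε < Metric.diam (F^[n] '' U)}
  /-- (b) not multi-sensitive: for every `ε > 0` there are nonempty open `U₁, U₂` with
  `D(U₁, ε) ∩ D(U₂, ε) = ∅` -/
  notMultiSensitive : ∀ ε : ℝ, 0 < ε → ∃ U₁ U₂ : Set Z,
    IsOpen U₁ ∧ U₁.Nonempty ∧ IsOpen U₂ ∧ U₂.Nonempty ∧
    {n : ℕ | ε < Metric.diam (F^[n] '' U₁)} ∩ {n : ℕ | ε < Metric.diam (F^[n] '' U₂)} = ∅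

section Construction
open Metric

noncomputable section TNM

structure Pt where
  c : ℕ
  t : ℕ
deriving DecidableEq

instance : MetricSpace Pt where
  dist p q := if p = q then 0 else 1
  dist_self p := by simp
  dist_comm p q := by simp [eq_comm]
  dist_triangle p q r := by
    by_cases h1 : p = q <;> by_cases h2 : q = r <;> by_cases h3 : p = r <;>
      simp_all
  eq_of_dist_eq_zero := by
    intro p q h
    by_contra hn
    simp only [if_neg hn] at h
    norm_num at h

lemma Pt.dist_def (p q : Pt) : dist p q = if p = q then 0 else 1 := rfl

lemma Pt.dist_le_one (p q : Pt) : dist p q ≤ 1 := by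
  rw [Pt.dist_def]; split <;> norm_num

instance : DiscreteTopology Pt := by
  rw [discreteTopology_iff_isOpen_singleton]
  intro a
  have : {a} = Metric.ball a (1/2) := by
    ext y
    simp only [mem_singleton_iff, Metric.mem_ball, Pt.dist_def]
    constructor
    · rintro rfl; simp
    · intro h; by_contra hn; rw [if_neg hn] at h; norm_num at h
  rw [this]; exact Metric.isOpen_ball

instance : CompleteSpace Pt := by
  constructor
  intro f hf
  haveI : f.NeBot := hf.1
  obtain ⟨t, htf, ht⟩ := (Metric.cauchy_iff.mp hf).2 (1/2) (by norm_num)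
  obtain ⟨x, hx⟩ := Filter.nonempty_of_mem htf
  refine ⟨x, ?_⟩
  have hsub : t ⊆ {x} := by
    intro y hy
    have h := ht y hy x hx
    rw [Pt.dist_def] at h
    by_contra hn
    rw [if_neg (by simpa using hn)] at h
    norm_num at h
  have : f ≤ pure x := Filter.le_pure_iff.mpr (Filter.mem_of_superset htf hsub)
  exact this.trans (pure_le_nhds x)

/-- The fiber: the unit interval. -/
abbrev Fib : Type := ↥(Set.Icc (0:ℝ) 1)

instance : CompleteSpace Fib := IsClosed.completeSpace_coe (hs := isClosed_Icc)

lemma Fib.dist_def (x y : Fib) : dist x y = |(x:ℝ) - (y:ℝ)| := rfl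

lemma Fib.dist_le_one (x y : Fib) : dist x y ≤ 1 := by
  rw [Fib.dist_def]
  have hx := x.2; have hy := y.2
  simp only [Set.mem_Icc] at hx hy
  rw [abs_le]; constructor <;> linarith [hx.1, hx.2, hy.1, hy.2]

/-- The whole phase space. -/
abbrev Zc : Type := Pt × Fib

lemma Zc.bounded (s : Set Zc) : Bornology.IsBounded s := by
  rw [Metric.isBounded_iff]
  refine ⟨1, ?_⟩
  intro p hp q hq
  rw [Prod.dist_eq]
  exact max_le (Pt.dist_le_one _ _) (Fib.dist_le_one _ _)

lemma Fib.boundedR (s : Set ℝ) (hs : s ⊆ Set.Icc 0 1) : Bornology.IsBounded s :=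
  (Metric.isBounded_Icc (0:ℝ) 1).subset hs

/-- tent map on ℝ -/
def Tr (x : ℝ) : ℝ := 1 - |2*x - 1|

/-- halving map on ℝ -/
def Hr (x : ℝ) : ℝ := x / 2

lemma Tr_mem {x : ℝ} (hx : x ∈ Set.Icc (0:ℝ) 1) : Tr x ∈ Set.Icc (0:ℝ) 1 := by
  simp only [Set.mem_Icc] at hx ⊢
  unfold Tr
  constructor
  · have : |2*x - 1| ≤ 1 := by rw [abs_le]; constructor <;> linarith [hx.1, hx.2]
    linarith
  · have : (0:ℝ) ≤ |2*x-1| := abs_nonneg _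
    linarith

lemma Hr_mem {x : ℝ} (hx : x ∈ Set.Icc (0:ℝ) 1) : Hr x ∈ Set.Icc (0:ℝ) 1 := by
  simp only [Set.mem_Icc] at hx ⊢
  unfold Hr
  constructor <;> linarith [hx.1, hx.2]

def Tt (x : Fib) : Fib := ⟨Tr x, Tr_mem x.2⟩
def Ht (x : Fib) : Fib := ⟨Hr x, Hr_mem x.2⟩

lemma continuous_Tr : Continuous Tr := by
  unfold Tr; fun_prop

lemma continuous_Tt : Continuous Tt :=
  (continuous_Tr.comp continuous_subtype_val).subtype_mk _

lemma continuous_Ht : Continuous Ht :=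
  ((continuous_subtype_val).div_const 2).subtype_mk _

/-- block starts for component `j` -/
def bs (j i : ℕ) : ℕ := (j / 2 + 1) * (if j % 2 = 0 then 1 else 4) * 16 ^ i

lemma bs_lb (j i : ℕ) : j / 2 + 1 ≤ bs j i := by
  unfold bs
  calc j / 2 + 1 = (j/2+1) * 1 * 1 := by ring
    _ ≤ (j / 2 + 1) * (if j % 2 = 0 then 1 else 4) * 16 ^ i := by
        apply Nat.mul_le_mul
        · apply Nat.mul_le_mul_left
          split <;> norm_num
        · exact Nat.one_le_pow _ _ (by norm_num)

lemma bs_pos (j i : ℕ) : 0 < bs j i := lt_of_lt_of_le (Nat.succ_pos _) (bs_lb j i)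

lemma bs_succ (j i : ℕ) : bs j (i+1) = 16 * bs j i := by
  unfold bs; ring

lemma bs_mono (j : ℕ) {i i' : ℕ} (h : i ≤ i') : bs j i ≤ bs j i' := by
  unfold bs
  exact Nat.mul_le_mul_left _ (Nat.pow_le_pow_right (by norm_num) h)

lemma bs_big (j M : ℕ) : ∃ i, M ≤ bs j i := by
  refine ⟨M, ?_⟩
  calc M ≤ 2 ^ M := Nat.le_of_lt (Nat.lt_two_pow_self (n := M))
    _ ≤ 16 ^ M := Nat.pow_le_pow_left (by norm_num) M
    _ ≤ bs j M := by
        unfold bs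
        calc 16 ^ M = 1 * 1 * 16 ^ M := by ring
          _ ≤ _ := by
            apply Nat.mul_le_mul_right
            apply Nat.mul_le_mul (Nat.succ_le_succ (Nat.zero_le _))
            split <;> norm_num

/-- the block membership predicate for component `j` -/
def InB (j k : ℕ) : Prop := ∃ i, bs j i ≤ k ∧ k < 3 * bs j i

open Classical in
/-- the fiber map applied at component `j`, time `k` -/
def fmap (j k : ℕ) : Fib → Fib := if InB j k then Tt ∘ Tt else Ht

lemma continuous_fmap (j k : ℕ) : Continuous (fmap j k) := by
  unfold fmap; split
  · exact continuous_Tt.comp continuous_Tt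
  · exact continuous_Ht

/-- the cascade map -/
def Fc : Zc → Zc := fun p => (⟨p.1.c, p.1.t + 1⟩, fmap p.1.c p.1.t p.2)

lemma continuous_Fc : Continuous Fc := by
  rw [continuous_iff_continuousAt]
  rintro ⟨b, x⟩
  have h1 : ContinuousAt (fun p : Zc => (⟨p.1.c, p.1.t + 1⟩ : Pt)) (b, x) := by
    exact ((continuous_of_discreteTopology (α := Pt)
      (f := fun q : Pt => (⟨q.c, q.t + 1⟩ : Pt))).comp continuous_fst).continuousAt
  have h2 : ContinuousAt (fun p : Zc => fmap p.1.c p.1.t p.2) (b, x) := by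
    have hnb : ({b} ×ˢ (Set.univ : Set Fib)) ∈ nhds (b, x) := by
      apply IsOpen.mem_nhds
      · exact (isOpen_discrete {b}).prod isOpen_univ
      · exact Set.mem_prod.mpr ⟨rfl, trivial⟩
    apply ContinuousAt.congr
      (((continuous_fmap b.c b.t).comp continuous_snd).continuousAt)
    filter_upwards [hnb] with p hp
    have : p.1 = b := hp.1
    rw [this]
    rfl
  exact h1.prodMk h2

/-- the composed fiber maps -/
def Phi (j k : ℕ) : ℕ → Fib → Fib
  | 0 => id
  | n+1 => fmap j (k+n) ∘ Phi j k n

lemma iter_apply (j k n : ℕ) (x : Fib) :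
    Fc^[n] (⟨j, k⟩, x) = (⟨j, k + n⟩, Phi j k n x) := by
  induction n with
  | zero => simp [Phi]
  | succ n ih =>
      rw [Function.iterate_succ_apply', ih]
      show ((⟨j, (k+n)+1⟩, fmap j (k+n) (Phi j k n x)) : Zc) = (⟨j, k + (n+1)⟩, Phi j k (n+1) x)
      rw [show k + n + 1 = k + (n+1) by ring]
      rfl

lemma Fib.bounded (s : Set Fib) : Bornology.IsBounded s := by
  rw [Metric.isBounded_iff]
  exact ⟨1, fun x _ y _ => Fib.dist_le_one x y⟩

lemma image_slice (j k n : ℕ) (V : Set Fib) :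
    Fc^[n] '' (({⟨j, k⟩} : Set Pt) ×ˢ V) = ({(⟨j, k + n⟩ : Pt)} : Set Pt) ×ˢ (Phi j k n '' V) := by
  ext ⟨q, y⟩
  constructor
  · rintro ⟨⟨p, x⟩, ⟨hp, hx⟩, heq⟩
    rw [Set.mem_singleton_iff] at hp
    subst hp
    rw [iter_apply] at heq
    injection heq with h1 h2
    subst h1; subst h2
    exact ⟨rfl, Set.mem_image_of_mem _ hx⟩
  · rintro ⟨hq, x, hx, hxy⟩
    have hq' : q = (⟨j, k + n⟩ : Pt) := hq
    subst hq'
    have hy : Phi j k n x = y := hxy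
    subst hy
    exact ⟨(⟨j, k⟩, x), ⟨rfl, hx⟩, by rw [iter_apply]⟩

lemma diam_slice (b : Pt) (s : Set Fib) :
    Metric.diam (({b} : Set Pt) ×ˢ s : Set Zc) = Metric.diam ((↑) '' s : Set ℝ) := by
  rw [isometry_subtype_coe.diam_image]
  apply le_antisymm
  · apply Metric.diam_le_of_forall_dist_le Metric.diam_nonneg
    rintro ⟨b₁, x⟩ ⟨hb₁, hx⟩ ⟨b₂, y⟩ ⟨hb₂, hy⟩
    rw [Set.mem_singleton_iff] at hb₁ hb₂
    have hb₁' : b₁ = b := hb₁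
    have hb₂' : b₂ = b := hb₂
    subst hb₁'; subst hb₂'
    rw [Prod.dist_eq, dist_self]
    refine max_le Metric.diam_nonneg ?_
    exact Metric.dist_le_diam_of_mem (Fib.bounded s) hx hy
  · apply Metric.diam_le_of_forall_dist_le Metric.diam_nonneg
    intro x hx y hy
    have : dist x y ≤ dist ((b, x) : Zc) (b, y) := by
      rw [Prod.dist_eq]; exact le_max_right _ _
    exact this.trans (Metric.dist_le_diam_of_mem (Zc.bounded _) ⟨rfl, hx⟩ ⟨rfl, hy⟩)

/-! ### Interval tracking machinery -/

/-- `s` contains a subinterval of `[0,1]` of length at least `l`. -/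
def PIn (l : ℝ) (s : Set ℝ) : Prop :=
  ∃ a b : ℝ, 0 ≤ a ∧ b ≤ 1 ∧ a + l ≤ b ∧ Set.Icc a b ⊆ s

lemma PIn.mono_l {l l' : ℝ} {s : Set ℝ} (h : PIn l s) (hl : l' ≤ l) : PIn l' s := by
  obtain ⟨a, b, h0, h1, h2, h3⟩ := h
  exact ⟨a, b, h0, h1, by linarith, h3⟩

lemma PIn.mono_s {l : ℝ} {s t : Set ℝ} (h : PIn l s) (hs : s ⊆ t) : PIn l t := by
  obtain ⟨a, b, h0, h1, h2, h3⟩ := h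
  exact ⟨a, b, h0, h1, h2, h3.trans hs⟩

lemma PIn_H {l : ℝ} {s : Set ℝ} (h : PIn l s) : PIn (l/2) (Hr '' s) := by
  obtain ⟨a, b, h0, h1, h2, h3⟩ := h
  refine ⟨a/2, b/2, by linarith, by linarith, by linarith, ?_⟩
  intro y hy
  obtain ⟨hy1, hy2⟩ := hy
  refine ⟨2*y, h3 ⟨by linarith, by linarith⟩, ?_⟩
  unfold Hr; ring

lemma Tr_image_lower {a b : ℝ} (h0 : 0 ≤ a) (hab : a ≤ b) (hb : b ≤ 1/2) :
    Set.Icc (2*a) (2*b) ⊆ Tr '' Set.Icc a b := by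
  intro y hy
  obtain ⟨hy1, hy2⟩ := hy
  refine ⟨y/2, ⟨by linarith, by linarith⟩, ?_⟩
  unfold Tr
  have h1 : |2*(y/2) - 1| = 1 - y := by
    rw [abs_of_nonpos (by linarith)]; ring
  rw [h1]; ring

lemma Tr_image_upper {a b : ℝ} (ha : 1/2 ≤ a) (hab : a ≤ b) (hb : b ≤ 1) :
    Set.Icc (2 - 2*b) (2 - 2*a) ⊆ Tr '' Set.Icc a b := by
  intro y hy
  obtain ⟨hy1, hy2⟩ := hy
  refine ⟨1 - y/2, ⟨by linarith, by linarith⟩, ?_⟩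
  unfold Tr
  have h1 : |2*(1 - y/2) - 1| = 1 - y := by
    rw [abs_of_nonneg (by linarith)]; ring
  rw [h1]; ring

lemma Tone {a b : ℝ} (h0 : 0 ≤ a) (hab : a ≤ b) (hb : b ≤ 1) :
    ∃ a' b', 0 ≤ a' ∧ b' ≤ 1 ∧ a' ≤ b' ∧ Set.Icc a' b' ⊆ Tr '' Set.Icc a b ∧
      (min (2*(b-a)) (1/2) ≤ b' - a' ∨ ((b-a) ≤ b' - a' ∧ b' = 1)) := by
  rcases le_or_gt b (1/2) with h | h
  · refine ⟨2*a, 2*b, by linarith, by linarith, by linarith,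
      Tr_image_lower h0 hab h, Or.inl ?_⟩
    have : min (2*(b-a)) (1/2) ≤ 2*(b-a) := min_le_left _ _
    linarith
  · rcases le_or_gt (1/2) a with h' | h'
    · refine ⟨2 - 2*b, 2 - 2*a, by linarith, by linarith, by linarith,
        Tr_image_upper h' hab hb, Or.inl ?_⟩
      have : min (2*(b-a)) (1/2) ≤ 2*(b-a) := min_le_left _ _
      linarith
    · rcases le_or_gt (b - a) (1 - 2*a) with hc | hc
      · refine ⟨2*a, 1, by linarith, le_refl 1, by linarith, ?_, Or.inr ⟨by linarith, rfl⟩⟩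
        have hsub : Set.Icc (2*a) 1 ⊆ Tr '' Set.Icc a (1/2) := by
          have := Tr_image_lower h0 (le_of_lt h') (le_refl (1/2))
          simpa using this
        exact hsub.trans (Set.image_mono (Set.Icc_subset_Icc_right (by linarith)))
      · refine ⟨2 - 2*b, 1, by linarith, le_refl 1, by linarith, ?_, Or.inr ⟨by linarith, rfl⟩⟩
        have hsub : Set.Icc (2 - 2*b) 1 ⊆ Tr '' Set.Icc (1/2) b := by
          have := Tr_image_upper (le_refl (1/2)) (le_of_lt h) hb
          have he : (2 - 2*(1/2) : ℝ) = 1 := by norm_num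
          rwa [he] at this
        exact hsub.trans (Set.image_mono (Set.Icc_subset_Icc_left (by linarith)))

lemma Tdouble {l : ℝ} {s : Set ℝ} (hl : 0 ≤ l) (h : PIn l s) :
    PIn (min (2*l) (1/2)) (Tr '' (Tr '' s)) := by
  obtain ⟨a, b, h0, h1, h2, h3⟩ := h
  have hab : a ≤ b := by linarith
  obtain ⟨a₁, b₁, g0, g1, g2, g3, g4⟩ := Tone h0 hab h1
  have hIm1 : Tr '' Set.Icc a b ⊆ Tr '' s := Set.image_mono h3
  rcases g4 with hL | ⟨hR, hb₁⟩
  · obtain ⟨a₂, b₂, f0, f1, f2, f3, f4⟩ := Tone g0 g2 g1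
    have hsub : Set.Icc a₂ b₂ ⊆ Tr '' (Tr '' s) :=
      f3.trans ((Set.image_mono g3).trans (Set.image_mono hIm1))
    have hgap : min (2*l) (1/2) ≤ b₂ - a₂ := by
      rcases f4 with fL | ⟨fR, _⟩
      · rcases le_total (2*(b-a)) (1/2) with hm | hm
        · rw [min_eq_left hm] at hL
          rcases le_total (2*(b₁-a₁)) (1/2) with hm2 | hm2
          · rw [min_eq_left hm2] at fL
            have : min (2*l) (1/2) ≤ 2*l := min_le_left _ _
            linarith
          · rw [min_eq_right hm2] at fL
            have : min (2*l) (1/2) ≤ 1/2 := min_le_right _ _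
            linarith
        · rw [min_eq_right hm] at hL
          have h6 : min (2*(b₁-a₁)) (1/2) = 1/2 := min_eq_right (by linarith)
          rw [h6] at fL
          have : min (2*l) (1/2) ≤ 1/2 := min_le_right _ _
          linarith
      · have hmin : min (2*l) (1/2) ≤ min (2*(b-a)) (1/2) := by
          apply le_min
          · exact (min_le_left _ _).trans (by linarith)
          · exact min_le_right _ _
        linarith
    exact ⟨a₂, b₂, f0, f1, by linarith, hsub⟩
  · subst hb₁
    rcases le_or_gt a₁ (1/2) with hA | hA
    · have hg : (1/2:ℝ) ≤ 1 - a₁ := by linarith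
      obtain ⟨a₂, b₂, f0, f1, f2, f3, f4⟩ := Tone g0 g2 g1
      have hsub : Set.Icc a₂ b₂ ⊆ Tr '' (Tr '' s) :=
        f3.trans ((Set.image_mono g3).trans (Set.image_mono hIm1))
      have hgap : min (2*l) (1/2) ≤ b₂ - a₂ := by
        have hhalf : min (2*l) (1/2) ≤ 1/2 := min_le_right _ _
        rcases f4 with fL | ⟨fR, _⟩
        · have : min (2*(1-a₁)) (1/2) = 1/2 := min_eq_right (by linarith)
          rw [this] at fL
          linarith
        · linarith
      exact ⟨a₂, b₂, f0, f1, by linarith, hsub⟩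
    · have hsub := Tr_image_upper (le_of_lt hA) g2 g1
      have he : (2 - 2*(1:ℝ)) = 0 := by norm_num
      rw [he] at hsub
      have hgap : min (2*l) (1/2) ≤ (2 - 2*a₁) - 0 := by
        have : min (2*l) (1/2) ≤ 2*l := min_le_left _ _
        linarith
      exact ⟨0, 2 - 2*a₁, le_refl 0, by linarith, by linarith,
        hsub.trans ((Set.image_mono g3).trans (Set.image_mono hIm1))⟩

lemma val_Tt (s : Set Fib) : (↑) '' (Tt '' s) = Tr '' (((↑) : Fib → ℝ) '' s) := by
  rw [← Set.image_comp, ← Set.image_comp]; rfl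

lemma val_Ht (s : Set Fib) : (↑) '' (Ht '' s) = Hr '' (((↑) : Fib → ℝ) '' s) := by
  rw [← Set.image_comp, ← Set.image_comp]; rfl

lemma Phi_succ_image (j k n : ℕ) (V : Set Fib) :
    Phi j k (n+1) '' V = fmap j (k+n) '' (Phi j k n '' V) := by
  show (fmap j (k+n) ∘ Phi j k n) '' V = _
  rw [Set.image_comp]

lemma fmap_block {j k : ℕ} (h : InB j k) (s : Set Fib) :
    (↑) '' (fmap j k '' s) = Tr '' (Tr '' (((↑) : Fib → ℝ) '' s)) := by
  unfold fmap
  rw [if_pos h]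
  rw [show (Tt ∘ Tt) '' s = Tt '' (Tt '' s) from Set.image_comp _ _ _, val_Tt, val_Tt]

lemma fmap_nonblock {j k : ℕ} (h : ¬ InB j k) (s : Set Fib) :
    (↑) '' (fmap j k '' s) = Hr '' (((↑) : Fib → ℝ) '' s) := by
  unfold fmap
  rw [if_neg h, val_Ht]

lemma phase1 (j k₀ : ℕ) (V : Set Fib) (l₀ : ℝ) (hpos : 0 ≤ l₀) (hl : l₀ ≤ 1/2)
    (hP : PIn l₀ (((↑) : Fib → ℝ) '' V)) :
    ∀ n, PIn ((1/2)^n * l₀) (((↑) : Fib → ℝ) '' (Phi j k₀ n '' V)) := by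
  intro n
  induction n with
  | zero => simpa [Phi] using hP
  | succ n ih =>
      rw [Phi_succ_image]
      have hnn : (0:ℝ) ≤ (1/2)^n * l₀ := by positivity
      have hle : ((1/2:ℝ))^n * l₀ ≤ 1/2 := by
        have h1 : ((1/2:ℝ))^n ≤ 1 := pow_le_one₀ (by norm_num) (by norm_num)
        nlinarith
      by_cases hB : InB j (k₀ + n)
      · rw [fmap_block hB]
        have := Tdouble hnn ih
        apply this.mono_l
        have e1 : ((1/2:ℝ))^(n+1) * l₀ = ((1/2)^n * l₀)/2 := by ring
        rw [e1]
        apply le_min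
        · linarith
        · linarith
      · rw [fmap_nonblock hB]
        have := PIn_H ih
        apply this.mono_l
        have e1 : ((1/2:ℝ))^(n+1) * l₀ = ((1/2)^n * l₀)/2 := by ring
        rw [e1]

lemma phase2 (j k₀ : ℕ) (V : Set Fib) (n₀ : ℕ) (μ : ℝ) (hμ : 0 ≤ μ)
    (hP : PIn μ (((↑) : Fib → ℝ) '' (Phi j k₀ n₀ '' V))) :
    ∀ r, (∀ q < r, InB j (k₀ + (n₀ + q))) →
      PIn (min (2^r * μ) (1/2)) (((↑) : Fib → ℝ) '' (Phi j k₀ (n₀ + r) '' V)) := by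
  intro r
  induction r with
  | zero =>
      intro _
      apply hP.mono_l
      simpa using min_le_left μ (1/2)
  | succ r ih =>
      intro hblk
      have ihr := ih (fun q hq => hblk q (Nat.lt_succ_of_lt hq))
      have hB : InB j (k₀ + (n₀ + r)) := hblk r (Nat.lt_succ_self r)
      have hnn : (0:ℝ) ≤ min (2^r * μ) (1/2) := le_min (by positivity) (by norm_num)
      have step := Tdouble hnn ihr
      rw [show n₀ + (r+1) = (n₀ + r) + 1 by ring, Phi_succ_image, fmap_block hB]
      apply step.mono_l
      apply le_min
      · rcases le_total ((2:ℝ)^r * μ) (1/2) with hm | hm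
        · rw [min_eq_left hm]
          calc min ((2:ℝ)^(r+1) * μ) (1/2) ≤ 2^(r+1) * μ := min_le_left _ _
            _ = 2 * (2^r * μ) := by ring
        · rw [min_eq_right hm]
          calc min ((2:ℝ)^(r+1) * μ) (1/2) ≤ 1/2 := min_le_right _ _
            _ ≤ 2 * (1/2) := by norm_num
      · exact min_le_right _ _

lemma slice_subset_open {U : Set Zc} (hU : IsOpen U) {p : Pt} {x : Fib}
    (hz : (p, x) ∈ U) :
    ∃ η : ℝ, 0 < η ∧ η ≤ 1/2 ∧ ({p} : Set Pt) ×ˢ (Metric.ball x η) ⊆ U := by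
  obtain ⟨δ, hδpos, hδ⟩ := Metric.isOpen_iff.mp hU (p, x) hz
  refine ⟨min δ (1/2), lt_min hδpos (by norm_num), min_le_right _ _, ?_⟩
  rintro ⟨p', y⟩ ⟨hp', hy⟩
  have hp'' : p' = p := hp'
  subst hp''
  apply hδ
  rw [Metric.mem_ball, Prod.dist_eq, dist_self]
  apply max_lt hδpos
  exact lt_of_lt_of_le hy (min_le_left _ _)

lemma ball_PIn (x : Fib) {η : ℝ} (hη : 0 < η) (hη2 : η ≤ 1/2) :
    PIn (η/2) (((↑) : Fib → ℝ) '' (Metric.ball x η)) := by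
  set c : ℝ := (x : ℝ) with hc
  have hcm : c ∈ Set.Icc (0:ℝ) 1 := x.2
  refine ⟨max 0 (c - η/2), min 1 (c + η/2), le_max_left _ _, min_le_left _ _, ?_, ?_⟩
  · rcases le_total (c + η/2) 1 with h | h
    · rw [min_eq_right h]
      have : max 0 (c - η/2) ≤ c := max_le hcm.1 (by linarith)
      linarith
    · rw [min_eq_left h]
      rcases le_total (c - η/2) 0 with h2 | h2
      · rw [max_eq_left h2]; linarith
      · rw [max_eq_right h2]; linarith [hcm.2]
  · intro y hy
    obtain ⟨hy1, hy2⟩ := hy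
    have hy0 : 0 ≤ y := le_trans (le_max_left _ _) hy1
    have hy1' : y ≤ 1 := le_trans hy2 (min_le_left _ _)
    have hyc1 : c - η/2 ≤ y := le_trans (le_max_right _ _) hy1
    have hyc2 : y ≤ c + η/2 := le_trans hy2 (min_le_right _ _)
    refine ⟨⟨y, hy0, hy1'⟩, ?_, rfl⟩
    rw [Metric.mem_ball, Fib.dist_def]
    have : |y - c| ≤ η/2 := abs_le.mpr ⟨by linarith, by linarith⟩
    calc |y - c| ≤ η/2 := this
      _ < η := by linarith

theorem thick_sens : ∀ U : Set Zc, IsOpen U → U.Nonempty →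
    ∀ N : ℕ, ∃ m : ℕ, ∀ k ≤ N, (1/4 : ℝ) < Metric.diam (Fc^[m + k] '' U) := by
  intro U hUo hUne N
  obtain ⟨⟨p, x⟩, hz⟩ := hUne
  obtain ⟨j, k₀⟩ := p
  obtain ⟨η, hη, hη2, hslice⟩ := slice_subset_open hUo hz
  set V : Set Fib := Metric.ball x η with hV
  set l₀ : ℝ := η/2 with hl₀
  have hl₀pos : 0 < l₀ := by positivity
  have hl₀le : l₀ ≤ 1/2 := by rw [hl₀]; linarith
  have hPV : PIn l₀ (((↑) : Fib → ℝ) '' V) := ball_PIn x hη hη2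
  obtain ⟨r₀, hr₀⟩ := pow_unbounded_of_one_lt (1/(2*l₀)) (one_lt_two (α := ℝ))
  have h2r : (1:ℝ)/2 ≤ 2^r₀ * l₀ := by
    rw [div_lt_iff₀ (by positivity)] at hr₀
    nlinarith
  obtain ⟨i, hi⟩ := bs_big j (k₀ + r₀ + N + 1)
  set β := bs j i with hβdef
  have hk₀β : k₀ ≤ β := by omega
  set nβ := β - k₀ with hnβ
  have hkn : k₀ + nβ = β := by omega
  have hnβle : nβ ≤ β := by omega
  have hP1 := phase1 j k₀ V l₀ (le_of_lt hl₀pos) hl₀le hPV nβ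
  refine ⟨nβ + β + r₀, ?_⟩
  intro k hk
  set r := β + r₀ + k with hr
  have hblk : ∀ q < r, InB j (k₀ + (nβ + q)) := by
    intro q hq
    refine ⟨i, ?_, ?_⟩ <;> omega
  have hμpos : (0:ℝ) ≤ (1/2)^nβ * l₀ := by positivity
  have hP2 := phase2 j k₀ V nβ _ hμpos hP1 r hblk
  have h12 : (1:ℝ)/2 ≤ 2^r * ((1/2)^nβ * l₀) := by
    have e1 : ((1/2:ℝ))^β ≤ (1/2)^nβ :=
      pow_le_pow_of_le_one (by norm_num) (by norm_num) hnβle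
    have e2 : ((2:ℝ))^(β + r₀) ≤ 2^r :=
      pow_le_pow_right₀ (by norm_num) (by omega)
    have e3 : ((2:ℝ))^(β+r₀) * ((1/2)^β * l₀) = 2^r₀ * l₀ := by
      rw [pow_add]
      have : ((1/2:ℝ))^β = (2^β)⁻¹ := by rw [one_div, inv_pow]
      rw [this]
      field_simp
    have e4 : ((2:ℝ))^(β+r₀) * ((1/2)^β * l₀) ≤ 2^r * ((1/2)^nβ * l₀) := by
      apply mul_le_mul e2 _ (by positivity) (by positivity)
      apply mul_le_mul_of_nonneg_right e1 (le_of_lt hl₀pos)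
    calc (1:ℝ)/2 ≤ 2^r₀ * l₀ := h2r
      _ = ((2:ℝ))^(β+r₀) * ((1/2)^β * l₀) := e3.symm
      _ ≤ _ := e4
  have hPfin : PIn (1/2) (((↑) : Fib → ℝ) '' (Phi j k₀ (nβ + r) '' V)) :=
    hP2.mono_l (le_min h12 le_rfl)
  obtain ⟨a, b, ha0, hb1, hgap, hsub⟩ := hPfin
  have hab : a ≤ b := by linarith
  obtain ⟨pa, hpa, hva⟩ := hsub ⟨le_rfl, hab⟩
  obtain ⟨pb, hpb, hvb⟩ := hsub ⟨hab, le_rfl⟩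
  have hnme : nβ + r = (nβ + β + r₀) + k := by omega
  have hsliceim :
      Fc^[nβ + r] '' (({(⟨j, k₀⟩ : Pt)} : Set Pt) ×ˢ V) ⊆ Fc^[nβ + r] '' U :=
    Set.image_mono hslice
  have hmem1 : ((⟨j, k₀ + (nβ + r)⟩ : Pt), pa) ∈ Fc^[nβ + r] '' U := by
    apply hsliceim
    rw [image_slice]
    exact ⟨rfl, hpa⟩
  have hmem2 : ((⟨j, k₀ + (nβ + r)⟩ : Pt), pb) ∈ Fc^[nβ + r] '' U := by
    apply hsliceim
    rw [image_slice]
    exact ⟨rfl, hpb⟩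
  have hdist : dist ((⟨j, k₀ + (nβ + r)⟩ : Pt), pa) ((⟨j, k₀ + (nβ + r)⟩ : Pt), pb)
      = b - a := by
    rw [Prod.dist_eq, dist_self, Fib.dist_def, hva, hvb]
    rw [abs_of_nonpos (by linarith), max_eq_right (by linarith)]
    ring
  rw [← hnme]
  calc (1/4:ℝ) < 1/2 := by norm_num
    _ ≤ b - a := by linarith
    _ = _ := hdist.symm
    _ ≤ Metric.diam (Fc^[nβ + r] '' U) :=
        Metric.dist_le_diam_of_mem (Zc.bounded _) hmem1 hmem2

/-! ### Part (b): not multi-sensitive -/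

lemma val_sub_Icc (s : Set Fib) : ((↑) : Fib → ℝ) '' s ⊆ Set.Icc 0 1 := by
  rintro y ⟨x, _, rfl⟩; exact x.2

lemma diam_val_le_one (s : Set Fib) : Metric.diam (((↑) : Fib → ℝ) '' s) ≤ 1 := by
  calc Metric.diam (((↑) : Fib → ℝ) '' s) ≤ Metric.diam (Set.Icc (0:ℝ) 1) :=
        Metric.diam_mono (val_sub_Icc s) (Metric.isBounded_Icc 0 1)
    _ = 1 := by rw [Real.diam_Icc (by norm_num)]; norm_num

lemma diam_Hr (s : Set ℝ) (hs : s ⊆ Set.Icc 0 1) :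
    Metric.diam (Hr '' s) ≤ Metric.diam s / 2 := by
  apply Metric.diam_le_of_forall_dist_le (by positivity)
  rintro y₁ ⟨x₁, h₁, rfl⟩ y₂ ⟨x₂, h₂, rfl⟩
  have he : dist (Hr x₁) (Hr x₂) = dist x₁ x₂ / 2 := by
    unfold Hr
    rw [Real.dist_eq, Real.dist_eq, show x₁ / 2 - x₂ / 2 = (x₁ - x₂) / 2 by ring,
      abs_div, abs_of_nonneg (by norm_num : (0:ℝ) ≤ 2)]
  rw [he]
  have : dist x₁ x₂ ≤ Metric.diam s :=
    Metric.dist_le_diam_of_mem ((Metric.isBounded_Icc (0:ℝ) 1).subset hs) h₁ h₂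
  linarith

lemma gap_free (c i : ℕ) {t : ℕ} (h1 : 3 * bs c i ≤ t) (h2 : t ≤ 3 * bs c i + c / 2) :
    ¬ InB c t := by
  rintro ⟨i', hb1, hb2⟩
  rcases le_or_gt i' i with hii | hii
  · have := bs_mono c hii
    omega
  · have h16 : 16 * bs c i ≤ bs c i' := by
      calc 16 * bs c i = bs c (i+1) := (bs_succ c i).symm
        _ ≤ bs c i' := bs_mono c hii
    have := bs_lb c i
    omega

lemma gap_decay (c : ℕ) (W : Set Fib) (t₀ : ℕ) :
    ∀ Δ : ℕ, (∀ h' < Δ, ¬ InB c (t₀ + h')) →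
      Metric.diam (((↑) : Fib → ℝ) '' (Phi c 0 (t₀ + Δ) '' W)) ≤
        (1/2)^Δ * Metric.diam (((↑) : Fib → ℝ) '' (Phi c 0 t₀ '' W)) := by
  intro Δ
  induction Δ with
  | zero => intro _; simp
  | succ Δ ih =>
      intro hfree
      have ihr := ih (fun h' hh => hfree h' (Nat.lt_succ_of_lt hh))
      have hnb : ¬ InB c (0 + (t₀ + Δ)) := by
        rw [Nat.zero_add]
        exact hfree Δ (Nat.lt_succ_self Δ)
      rw [show t₀ + (Δ+1) = (t₀ + Δ) + 1 by ring, Phi_succ_image, fmap_nonblock hnb]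
      have hd := diam_Hr _ (val_sub_Icc (Phi c 0 (t₀ + Δ) '' W))
      calc Metric.diam (Hr '' (((↑) : Fib → ℝ) '' (Phi c 0 (t₀+Δ) '' W)))
          ≤ Metric.diam (((↑) : Fib → ℝ) '' (Phi c 0 (t₀+Δ) '' W)) / 2 := hd
        _ ≤ ((1/2)^Δ * Metric.diam (((↑) : Fib → ℝ) '' (Phi c 0 t₀ '' W))) / 2 := by
            linarith
        _ = (1/2)^(Δ+1) * Metric.diam (((↑) : Fib → ℝ) '' (Phi c 0 t₀ '' W)) := by
            ring

lemma diam_W_start (w : ℝ) (hw : 0 ≤ w) :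
    Metric.diam (((↑) : Fib → ℝ) '' {y : Fib | (y:ℝ) < w}) ≤ w := by
  have hsub : ((↑) : Fib → ℝ) '' {y : Fib | (y:ℝ) < w} ⊆ Set.Icc 0 w := by
    rintro y ⟨x, hx, rfl⟩
    exact ⟨x.2.1, le_of_lt hx⟩
  calc Metric.diam _ ≤ Metric.diam (Set.Icc (0:ℝ) w) :=
        Metric.diam_mono hsub (Metric.isBounded_Icc 0 w)
    _ = w := by rw [Real.diam_Icc hw]; norm_num

/-- the key upper bound: away from (slightly enlarged) blocks, the diameter is tiny -/
lemma small_away (c m' : ℕ) (hc : c / 2 = m') :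
    ∀ n : ℕ,
      Metric.diam (((↑) : Fib → ℝ) '' (Phi c 0 n '' {y : Fib | (y:ℝ) < (1/2)^(m'+1)}))
          ≤ (1/2)^(m'+1)
        ∨ ∃ i, bs c i ≤ n ∧ n ≤ 3 * bs c i + m' := by
  set w : ℝ := (1/2)^(m'+1) with hwdef
  have hw : 0 ≤ w := by positivity
  set W : Set Fib := {y : Fib | (y:ℝ) < w} with hWdef
  intro n
  induction n with
  | zero =>
      left
      simpa [Phi] using diam_W_start w hw
  | succ n ih =>
      by_cases hE : ∃ i, bs c i ≤ n+1 ∧ n+1 ≤ 3 * bs c i + m'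
      · right; exact hE
      · push_neg at hE
        left
        rcases ih with hd | ⟨i, hi1, hi2⟩
        · have hnb : ¬ InB c (0 + n) := by
            rw [Nat.zero_add]
            rintro ⟨i, hb1, hb2⟩
            exact absurd (hE i (by omega)) (by omega)
          rw [Phi_succ_image, fmap_nonblock hnb]
          have hd2 := diam_Hr _ (val_sub_Icc (Phi c 0 n '' W))
          calc Metric.diam (Hr '' (((↑) : Fib → ℝ) '' (Phi c 0 n '' W)))
              ≤ Metric.diam (((↑) : Fib → ℝ) '' (Phi c 0 n '' W)) / 2 := hd2
            _ ≤ w / 2 := by linarith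
            _ ≤ w := by linarith
        · -- previous time was inside an enlarged block; it must have just ended
          have hni : n = 3 * bs c i + m' := by
            have := hE i (by omega)
            omega
          have hfree : ∀ h' < m' + 1, ¬ InB c (3 * bs c i + h') := by
            intro h' hh
            exact gap_free c i (by omega) (by omega)
          have hdec := gap_decay c W (3 * bs c i) (m'+1) hfree
          have hone := diam_val_le_one (Phi c 0 (3 * bs c i) '' W)
          have hppos : (0:ℝ) ≤ (1/2:ℝ)^(m'+1) := by positivity
          have heq : (3 * bs c i) + (m' + 1) = n + 1 := by omega
          rw [heq] at hdec
          calc Metric.diam (((↑) : Fib → ℝ) '' (Phi c 0 (n+1) '' W))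
              ≤ (1/2)^(m'+1) * Metric.diam (((↑) : Fib → ℝ) '' (Phi c 0 (3 * bs c i) '' W)) := hdec
            _ ≤ (1/2)^(m'+1) * 1 := by nlinarith
            _ = w := by rw [hwdef]; ring

lemma bs_even (m' i : ℕ) : bs (2*m') i = (m'+1) * 16^i := by
  unfold bs
  have h1 : (2*m')/2 = m' := by omega
  have h2 : (2*m') % 2 = 0 := by omega
  rw [h1, h2, if_pos rfl]
  ring

lemma bs_odd (m' i : ℕ) : bs (2*m'+1) i = (m'+1) * 4 * 16^i := by
  unfold bs
  have h1 : (2*m'+1)/2 = m' := by omega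
  have h2 : (2*m'+1) % 2 = 1 := by omega
  rw [h1, h2, if_neg (by norm_num)]

theorem not_multi : ∀ ε : ℝ, 0 < ε → ∃ U₁ U₂ : Set Zc,
    IsOpen U₁ ∧ U₁.Nonempty ∧ IsOpen U₂ ∧ U₂.Nonempty ∧
    {n : ℕ | ε < Metric.diam (Fc^[n] '' U₁)} ∩
      {n : ℕ | ε < Metric.diam (Fc^[n] '' U₂)} = ∅ := by
  intro ε hε
  obtain ⟨m', hm'⟩ := exists_pow_lt_of_lt_one hε (by norm_num : (1/2:ℝ) < 1)
  set w : ℝ := (1/2)^(m'+1) with hwdef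
  have hwε : w < ε := by
    have : w < (1/2:ℝ)^m' := by
      rw [hwdef, pow_succ]
      have hp : (0:ℝ) < (1/2:ℝ)^m' := by positivity
      nlinarith
    linarith
  set W : Set Fib := {y : Fib | (y:ℝ) < w} with hWdef
  have hWopen : IsOpen W := by
    have : W = ((↑) : Fib → ℝ) ⁻¹' (Set.Iio w) := rfl
    rw [this]
    exact (isOpen_Iio).preimage continuous_subtype_val
  have hWne : W.Nonempty := by
    refine ⟨⟨0, by norm_num⟩, ?_⟩
    show (0:ℝ) < w
    positivity
  -- the two open sets, in components 2m' and 2m'+1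
  refine ⟨({(⟨2*m', 0⟩ : Pt)} : Set Pt) ×ˢ W, ({(⟨2*m'+1, 0⟩ : Pt)} : Set Pt) ×ˢ W,
    (isOpen_discrete _).prod hWopen, ?_, (isOpen_discrete _).prod hWopen, ?_, ?_⟩
  · obtain ⟨y, hy⟩ := hWne; exact ⟨(⟨2*m', 0⟩, y), rfl, hy⟩
  · obtain ⟨y, hy⟩ := hWne; exact ⟨(⟨2*m'+1, 0⟩, y), rfl, hy⟩
  rw [Set.eq_empty_iff_forall_notMem]
  rintro n ⟨hn1, hn2⟩
  simp only [Set.mem_setOf_eq] at hn1 hn2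
  -- rewrite the diameters
  have hdiam : ∀ c : ℕ, Metric.diam (Fc^[n] '' (({(⟨c, 0⟩ : Pt)} : Set Pt) ×ˢ W)) =
      Metric.diam (((↑) : Fib → ℝ) '' (Phi c 0 n '' W)) := by
    intro c
    rw [image_slice, diam_slice]
  rw [hdiam] at hn1 hn2
  -- so n lies in an enlarged block for both components
  have h1 := small_away (2*m') m' (by omega) n
  have h2 := small_away (2*m'+1) m' (by omega) n
  rcases h1 with h1 | ⟨i, hi1, hi2⟩
  · rw [← hwdef] at h1; linarith
  rcases h2 with h2 | ⟨i', hj1, hj2⟩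
  · rw [← hwdef] at h2; linarith
  rw [bs_even] at hi1 hi2
  rw [bs_odd] at hj1 hj2
  -- contradiction by arithmetic
  have hA : 1 ≤ 16^i := Nat.one_le_pow _ _ (by norm_num)
  have hB : 1 ≤ 16^i' := Nat.one_le_pow _ _ (by norm_num)
  rcases le_or_gt i i' with hii | hii
  · have hAB : 16^i ≤ 16^i' := Nat.pow_le_pow_right (by norm_num) hii
    have key : 3 * ((m'+1) * 16^i) + m' < (m'+1) * 4 * 16^i' := by nlinarith
    omega
  · have hAB : 16 * 16^i' ≤ 16^i := by
      calc 16 * 16^i' = 16^(i'+1) := by ring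
        _ ≤ 16^i := Nat.pow_le_pow_right (by norm_num) hii
    have key : 3 * ((m'+1) * 4 * 16^i') + m' < (m'+1) * 16^i := by nlinarith
    omega

end TNM

end Construction

/-- There exists a complete metric space `Z` and a continuous `F : Z → Z` such that the
cascade `(Z, F)` is thickly sensitive but not multi-sensitive. -/
theorem stmt16 : Nonempty ThicklySensitiveNotMultiCascade := by
  refine ⟨{ Z := Zc, instMet := inferInstance, instComplete := inferInstance,
            F := Fc, contF := continuous_Fc,
            thicklySensitive := ?_, notMultiSensitive := ?_ }⟩
  · refine ⟨1/4, by norm_num, fun U hU hne N => ?_⟩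
    obtain ⟨m, hm⟩ := thick_sens U hU hne N
    exact ⟨m, fun k hk => hm k hk⟩
  · exact not_multi
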